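/- There is a natural duoidal interchange map (p ◁ q) ⊗ (p' ◁ q') → (p ⊗ p') ◁ (q ⊗ q') of polynomial functors, where ◁ is composition of polynomial functors and ⊗ is the Dirichlet product. -/

import Mathlib

universe u

/-- The Dirichlet product `p ⊗ q`. -/
def tens (p q : PFunctor.{u, u}) : PFunctor.{u, u} :=
  ⟨p.A × q.A, fun ij => p.B ij.1 × q.B ij.2⟩

/-- Morphisms of polynomial functors in combinatorial form. -/
def PHom (p q : PFunctor.{u, u}) : Type u :=
  Σ f : p.A → q.A, ∀ i : p.A, q.B (f i) → p.B i

/-- Composition of morphisms of polynomial functors. -/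
def PHom.comp {p q r : PFunctor.{u, u}} (φ : PHom p q) (ψ : PHom q r) : PHom p r :=
  ⟨fun i => ψ.1 (φ.1 i), fun i d => φ.2 i (ψ.2 (φ.1 i) d)⟩

/-- The Dirichlet product of two morphisms. -/
def tensHom {p p' q q' : PFunctor.{u, u}} (f : PHom p p') (g : PHom q q') :
    PHom (tens p q) (tens p' q') :=
  ⟨fun ij => (f.1 ij.1, g.1 ij.2), fun ij d => (f.2 ij.1 d.1, g.2 ij.2 d.2)⟩

/-- The composition product (`◁`, i.e. `PFunctor.comp`) of two morphisms. -/
def compHom {p p' q q' : PFunctor.{u, u}} (f : PHom p p') (g : PHom q q') :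
    PHom (p.comp q) (p'.comp q') :=
  ⟨fun aj => ⟨f.1 aj.1, fun d' => g.1 (aj.2 (f.2 aj.1 d'))⟩,
   fun aj uv => ⟨f.2 aj.1 uv.1, g.2 (aj.2 (f.2 aj.1 uv.1)) uv.2⟩⟩

/-- there is a duoidal interchange morphism
`(p ◁ q) ⊗ (p' ◁ q') → (p ⊗ p') ◁ (q ⊗ q')`, natural in all four variables. -/
theorem duoidal_interchange :
    ∃ θ : ∀ p q p' q' : PFunctor.{u, u},
        PHom (tens (p.comp q) (p'.comp q')) ((tens p p').comp (tens q q')),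
      ∀ (p₁ p₂ q₁ q₂ p₁' p₂' q₁' q₂' : PFunctor.{u, u})
        (f : PHom p₁ p₂) (g : PHom q₁ q₂) (f' : PHom p₁' p₂') (g' : PHom q₁' q₂'),
        PHom.comp (tensHom (compHom f g) (compHom f' g')) (θ p₂ q₂ p₂' q₂') =
          PHom.comp (θ p₁ q₁ p₁' q₁') (compHom (tensHom f f') (tensHom g g')) := by
  refine ⟨fun p q p' q' =>
    ⟨fun x => ⟨(x.1.1, x.2.1), fun dd' => (x.1.2 dd'.1, x.2.2 dd'.2)⟩,
     fun x uv => (⟨uv.1.1, uv.2.1⟩, ⟨uv.1.2, uv.2.2⟩)⟩, ?_⟩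
  intros
  rfl
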